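/- For every real E with |E| < 4√2/3, the function x ↦ Re f_b(x) on ℝ attains its minimum at the point b_s = E/2, and moreover f_b(b_s) = 0 and f_b'(b_s) = 0. -/

import Mathlib

/-- The constant `C*` from the paper (principal branch of the logarithm). -/
noncomputable def Cstar (E : ℝ) : ℂ :=
  ((E : ℂ) / 2 + Complex.I * (Real.sqrt (4 - E ^ 2) : ℝ) / 2) ^ 2 / 2
    + Complex.log (-(E : ℂ) / 2 + Complex.I * (Real.sqrt (4 - E ^ 2) : ℝ) / 2)

/-- The function `f_b` from the paper. -/
noncomputable def fb (E : ℝ) (x : ℝ) : ℂ :=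
  ((x : ℂ) + Complex.I * (Real.sqrt (4 - E ^ 2) : ℝ) / 2) ^ 2 / 2
    + Complex.log ((x : ℂ) - (E : ℂ) + Complex.I * (Real.sqrt (4 - E ^ 2) : ℝ) / 2)
    - Cstar E

lemma relog (E x s : ℝ) :
    (Complex.log ((x : ℂ) - (E : ℂ) + Complex.I * (s : ℝ) / 2)).re
      = Real.log ((x - E)^2 + (s/2)^2) / 2 := by
  rw [Complex.log_re]
  have hz : ((x : ℂ) - (E : ℂ) + Complex.I * (s : ℝ) / 2) = Complex.mk (x - E) (s/2) := by
    apply Complex.ext <;> simp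
  rw [hz, Complex.norm_def, Complex.normSq_mk,
    show (x-E)*(x-E) + s/2*(s/2) = (x - E)^2 + (s/2)^2 by ring,
    Real.log_sqrt (by positivity)]

lemma resq (x s : ℝ) :
    ((((x : ℂ) + Complex.I * (s : ℝ) / 2) ^ 2) / 2).re = (x^2 - (s/2)^2)/2 := by
  have hz : ((x : ℂ) + Complex.I * (s : ℝ) / 2) = Complex.mk x (s/2) := by
    apply Complex.ext <;> simp
  rw [hz]
  simp [pow_two, Complex.mul_re, Complex.div_re, Complex.normSq]

lemma re_fb (E : ℝ) (hE4 : E^2 < 4) (x : ℝ) :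
    (fb E x).re = (x^2 + Real.log ((x - E)^2 + (1 - E^2/4)))/2 - E^2/8 := by
  set s := Real.sqrt (4 - E^2) with hsdef
  have hs2 : s^2 = 4 - E^2 := Real.sq_sqrt (by linarith)
  have h1 : (Cstar E).re = (E^2/4 - (s/2)^2)/2 := by
    have : (-(E : ℂ) / 2 + Complex.I * (s : ℝ) / 2)
        = ((((-E)/2 : ℝ)) : ℂ) - ((0:ℝ) : ℂ) + Complex.I * (s : ℝ) / 2 := by push_cast; ring
    rw [Cstar,
      show ((E : ℂ)/2 + Complex.I * (s:ℝ)/2) = (((E/2 : ℝ)):ℂ) + Complex.I * (s:ℝ)/2 by push_cast; ring,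
      Complex.add_re, resq, this, relog]
    have habs : ((-E)/2 - 0)^2 + (s/2)^2 = 1 := by nlinarith [hs2]
    rw [habs, Real.log_one]
    ring
  rw [show (fb E x) = (((x : ℂ) + Complex.I * (s : ℝ) / 2) ^ 2 / 2
      + Complex.log ((x : ℂ) - (E : ℂ) + Complex.I * (s : ℝ) / 2)) - Cstar E from rfl,
    Complex.sub_re, Complex.add_re, resq, relog, h1]
  have : (s/2)^2 = 1 - E^2/4 := by nlinarith [hs2]
  rw [this]
  ring

/-- for `|E| < 4√2/3`, `Re f_b` attains its minimum at `b_s = E/2`,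
and `f_b(b_s) = 0`, `f_b'(b_s) = 0`. -/
theorem fb_min (E : ℝ) (hE : |E| < 4 * Real.sqrt 2 / 3) :
    (∀ x : ℝ, (fb E (E / 2)).re ≤ (fb E x).re) ∧
    fb E (E / 2) = 0 ∧
    deriv (fb E) (E / 2) = 0 := by
  have hs2' : Real.sqrt 2 ^ 2 = 2 := Real.sq_sqrt (by norm_num)
  have hE2 : E^2 < 32/9 := by
    have h1 : |E|^2 < (4 * Real.sqrt 2 / 3)^2 := by
      apply pow_lt_pow_left₀ hE (abs_nonneg E) (by norm_num)
    rw [sq_abs] at h1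
    nlinarith
  have hE4 : E^2 < 4 := by linarith
  set s := Real.sqrt (4 - E^2) with hsdef
  have hspos : 0 < s := Real.sqrt_pos.mpr (by linarith)
  have hs2 : s^2 = 4 - E^2 := Real.sq_sqrt (by linarith)
  -- value at E/2 is 0
  have hval : fb E (E/2) = 0 := by
    rw [fb, Cstar]
    have h1 : ((E/2 : ℝ) : ℂ) + Complex.I * (s:ℝ)/2 = (E:ℂ)/2 + Complex.I * (s:ℝ)/2 := by
      push_cast; ring
    have h2 : ((E/2 : ℝ) : ℂ) - (E:ℂ) + Complex.I * (s:ℝ)/2 = -(E:ℂ)/2 + Complex.I * (s:ℝ)/2 := by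
      push_cast; ring
    rw [h1, h2]; ring
  refine ⟨?_, hval, ?_⟩
  · -- minimality
    intro x
    rw [re_fb E hE4, re_fb E hE4]
    have key : ∀ y : ℝ, ((E/2)^2 + Real.log ((E/2 - E)^2 + (1 - E^2/4)))
        ≤ (y^2 + Real.log ((y - E)^2 + (1 - E^2/4))) := by
      set c : ℝ := 1 - E^2/4 with hc
      have hcpos : 0 < c := by rw [hc]; linarith
      set φ : ℝ → ℝ := fun y => y^2 + Real.log ((y - E)^2 + c) with hφ
      have hder : ∀ y : ℝ, HasDerivAt φ (2*y + (2*(y-E))/((y-E)^2 + c)) y := by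
        intro y
        have htpos : 0 < (y-E)^2 + c := by positivity
        have hu : HasDerivAt (fun y : ℝ => (y - E)^2 + c) (2*(y-E)) y := by
          have := (((hasDerivAt_id y).sub_const E).pow 2).add_const c
          simpa using this
        have hlog := hu.log htpos.ne'
        have hsq : HasDerivAt (fun y : ℝ => y^2) (2*y) y := by
          simpa using hasDerivAt_pow 2 y
        exact hsq.add hlog
      have hdiff : Differentiable ℝ φ := fun y => (hder y).differentiableAt
      have hderiv_eq : ∀ y : ℝ, deriv φ y = 2*y + (2*(y-E))/((y-E)^2 + c) :=
        fun y => (hder y).deriv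
      have hsign : ∀ y : ℝ, (y*((y-E)^2+c) + (y-E)) = (y - E/2)*((y - 3*E/4)^2 + (32 - 9*E^2)/16) := by
        intro y; rw [hc]; ring
      have hmono : MonotoneOn φ (Set.Ici (E/2)) := by
        apply monotoneOn_of_deriv_nonneg (convex_Ici _) hdiff.continuous.continuousOn
          (hdiff.differentiableOn)
        intro y hy
        rw [interior_Ici] at hy
        rw [hderiv_eq]
        have htpos : 0 < (y-E)^2 + c := by positivity
        have hnum : 0 ≤ y*((y-E)^2+c) + (y-E) := by
          rw [hsign]
          have h1 : 0 ≤ y - E/2 := by simp at hy; linarith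
          have h2 : 0 ≤ (y - 3*E/4)^2 + (32 - 9*E^2)/16 := by
            nlinarith [sq_nonneg (y - 3*E/4)]
          exact mul_nonneg h1 h2
  
        have : 2*y + (2*(y-E))/((y-E)^2 + c) = 2*(y*((y-E)^2+c) + (y-E))/((y-E)^2+c) := by
          field_simp
        rw [this]; positivity
      have hanti : AntitoneOn φ (Set.Iic (E/2)) := by
        apply antitoneOn_of_deriv_nonpos (convex_Iic _) hdiff.continuous.continuousOn
          (hdiff.differentiableOn)
        intro y hy
        rw [interior_Iic] at hy
        rw [hderiv_eq]
        have htpos : 0 < (y-E)^2 + c := by positivity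
        have hnum : y*((y-E)^2+c) + (y-E) ≤ 0 := by
          rw [hsign]
          have h1 : y - E/2 ≤ 0 := by simp at hy; linarith
          have h2 : 0 ≤ (y - 3*E/4)^2 + (32 - 9*E^2)/16 := by
            nlinarith [sq_nonneg (y - 3*E/4)]
          nlinarith
        have heq : 2*y + (2*(y-E))/((y-E)^2 + c) = 2*(y*((y-E)^2+c) + (y-E))/((y-E)^2+c) := by
          field_simp
        rw [heq]
        apply div_nonpos_of_nonpos_of_nonneg (by linarith) htpos.le
      intro y
      rcases le_or_gt (E/2) y with h | h
      · exact hmono (Set.self_mem_Ici) h h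
      · exact hanti h.le Set.self_mem_Iic h.le
    linarith [key x]
  · -- derivative
    have hw : (-(E:ℂ)/2 + Complex.I * (s:ℝ)/2) ∈ Complex.slitPlane := by
      rw [Complex.mem_slitPlane_iff]
      right
      simp [Complex.add_im]
      positivity
    set z₀ : ℂ := ((E/2 : ℝ) : ℂ) with hz₀
    have hg : HasDerivAt (fun z : ℂ => z - (E:ℂ) + Complex.I * (s:ℝ)/2) 1 z₀ :=
      ((hasDerivAt_id z₀).sub_const _).add_const _
    have hgz : z₀ - (E:ℂ) + Complex.I * (s:ℝ)/2 = -(E:ℂ)/2 + Complex.I * (s:ℝ)/2 := by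
      rw [hz₀]; push_cast; ring
    have hlog : HasDerivAt (fun z : ℂ => Complex.log (z - (E:ℂ) + Complex.I * (s:ℝ)/2))
        (1 / (-(E:ℂ)/2 + Complex.I * (s:ℝ)/2)) z₀ := by
      have := hg.clog (by rw [hgz]; exact hw)
      rwa [hgz] at this
    have hsq : HasDerivAt (fun z : ℂ => (z + Complex.I * (s:ℝ)/2)^2/2)
        (z₀ + Complex.I * (s:ℝ)/2) z₀ := by
      have := (((hasDerivAt_id z₀).add_const (Complex.I * (s:ℝ)/2)).pow 2).div_const 2
      exact this.congr_deriv (by simp)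
    have hF : HasDerivAt (fun z : ℂ => (z + Complex.I * (s:ℝ)/2)^2/2
        + Complex.log (z - (E:ℂ) + Complex.I * (s:ℝ)/2) - Cstar E)
        ((z₀ + Complex.I * (s:ℝ)/2) + 1 / (-(E:ℂ)/2 + Complex.I * (s:ℝ)/2)) z₀ :=
      (hsq.add hlog).sub_const _
    have hfb : HasDerivAt (fb E)
        ((z₀ + Complex.I * (s:ℝ)/2) + 1 / (-(E:ℂ)/2 + Complex.I * (s:ℝ)/2)) (E/2) := by
      exact hF.comp_ofReal
    have hzero : (z₀ + Complex.I * (s:ℝ)/2) + 1 / (-(E:ℂ)/2 + Complex.I * (s:ℝ)/2) = 0 := by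
      have hs2c : ((s:ℂ))^2 = 4 - (E:ℂ)^2 := by exact_mod_cast congrArg (Complex.ofReal) hs2
      have hinv : (-(E:ℂ)/2 + Complex.I * (s:ℝ)/2)⁻¹ = -((E:ℂ)/2 + Complex.I * (s:ℝ)/2) := by
        apply inv_eq_of_mul_eq_one_right
        linear_combination (-(s:ℂ)^2/4) * Complex.I_sq + (1/4 : ℂ) * hs2c
      rw [hz₀, one_div, hinv]
      push_cast
      ring
    rw [hzero] at hfb
    exact hfb.deriv
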